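/- For every natural number n and every integer p, the sum over j from 0 to ⌊n/2⌋ of (-1)^j * C(n-j, j) * P_{p+n-3j} equals (-1)^{n-1} * (P_{p+1} * P_{n-3} - P_p * P_{n-2}). -/
import Mathlib

private def Spad (P : ℤ → ℤ) (n : ℕ) (p : ℤ) : ℤ :=
  ∑ j ∈ Finset.range (n / 2 + 1),
    (-1 : ℤ) ^ j * (Nat.choose (n - j) j : ℤ) * P (p + n - 3 * j)

private lemma Spad_rec (P : ℤ → ℤ) (n : ℕ) (p : ℤ) :
    Spad P (n + 2) p = Spad P (n + 1) (p + 1) - Spad P n (p - 1) := by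
  have pascal : ∀ j : ℕ, j ≤ n →
      ((n + 2 - (j + 1)).choose (j + 1) : ℤ)
        = ((n - j).choose j : ℤ) + ((n - j).choose (j + 1) : ℤ) := by
    intro j hj
    have h : n + 2 - (j + 1) = (n - j) + 1 := by omega
    rw [h, Nat.choose_succ_succ]
    push_cast
    ring
  unfold Spad
  have e1 : (n + 2) / 2 + 1 = (n / 2 + 1) + 1 := by omega
  rw [e1, Finset.sum_range_succ' _ (n / 2 + 1), Finset.sum_range_succ' _ ((n + 1) / 2)]
  have hf0 : (-1 : ℤ) ^ (0:ℕ) * ((n + 2 - 0).choose 0 : ℤ) * P (p + ↑(n + 2) - 3 * ↑(0:ℕ))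
      = (-1 : ℤ) ^ (0:ℕ) * ((n + 1 - 0).choose 0 : ℤ) * P ((p + 1) + ↑(n + 1) - 3 * ↑(0:ℕ)) := by
    norm_num
    congr 1
    push_cast
    ring
  have hterm : ∀ j ∈ Finset.range (n / 2 + 1),
      (-1 : ℤ) ^ (j + 1) * ((n + 2 - (j + 1)).choose (j + 1) : ℤ)
          * P (p + ↑(n + 2) - 3 * ↑(j + 1))
        + (-1 : ℤ) ^ j * ((n - j).choose j : ℤ) * P ((p - 1) + ↑n - 3 * ↑j)
      = (-1 : ℤ) ^ (j + 1) * ((n - j).choose (j + 1) : ℤ) * P (p + ↑n - 1 - 3 * ↑j) := by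
    intro j hj
    simp only [Finset.mem_range] at hj
    have harg1 : p + ↑(n + 2) - 3 * (↑(j + 1) : ℤ) = p + ↑n - 1 - 3 * ↑j := by push_cast; ring
    have harg2 : (p - 1) + (↑n : ℤ) - 3 * ↑j = p + ↑n - 1 - 3 * ↑j := by ring
    rw [harg1, harg2, pascal j (by omega)]
    ring
  have hG : ∑ j ∈ Finset.range (n / 2 + 1),
        (-1 : ℤ) ^ (j + 1) * ((n - j).choose (j + 1) : ℤ) * P (p + ↑n - 1 - 3 * ↑j)
      = ∑ j ∈ Finset.range ((n + 1) / 2),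
        (-1 : ℤ) ^ (j + 1) * ((n + 1 - (j + 1)).choose (j + 1) : ℤ)
          * P ((p + 1) + ↑(n + 1) - 3 * ↑(j + 1)) := by
    have hcong : ∀ j ∈ Finset.range ((n + 1) / 2),
        (-1 : ℤ) ^ (j + 1) * ((n - j).choose (j + 1) : ℤ) * P (p + ↑n - 1 - 3 * ↑j)
        = (-1 : ℤ) ^ (j + 1) * ((n + 1 - (j + 1)).choose (j + 1) : ℤ)
            * P ((p + 1) + ↑(n + 1) - 3 * ↑(j + 1)) := by
      intro j hj
      simp only [Finset.mem_range] at hj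
      have h1 : n + 1 - (j + 1) = n - j := by omega
      have h2 : (p + 1) + (↑(n + 1) : ℤ) - 3 * ↑(j + 1) = p + ↑n - 1 - 3 * ↑j := by
        push_cast; ring
      rw [h1, h2]
    rcases Nat.even_or_odd n with ⟨m, rfl⟩ | ⟨m, rfl⟩
    · have hz : (m + m + 1) / 2 = m := by omega
      rw [hz] at hcong ⊢
      have hr : (m + m) / 2 + 1 = m + 1 := by omega
      rw [hr, Finset.sum_range_succ, Finset.sum_congr rfl hcong]
      have hzero : ((m + m - m).choose (m + 1) : ℤ) = 0 := by
        have h : m + m - m = m := by omega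
        rw [h, Nat.choose_succ_self]
        norm_num
      rw [hzero]
      ring
    · have hr : (2 * m + 1) / 2 + 1 = (2 * m + 1 + 1) / 2 := by omega
      rw [hr]
      exact Finset.sum_congr rfl hcong
  have hsum : (∑ j ∈ Finset.range (n / 2 + 1),
        (-1 : ℤ) ^ (j + 1) * ((n + 2 - (j + 1)).choose (j + 1) : ℤ)
          * P (p + ↑(n + 2) - 3 * ↑(j + 1)))
      + ∑ j ∈ Finset.range (n / 2 + 1),
        (-1 : ℤ) ^ j * ((n - j).choose j : ℤ) * P ((p - 1) + ↑n - 3 * ↑j)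
      = ∑ j ∈ Finset.range (n / 2 + 1),
        (-1 : ℤ) ^ (j + 1) * ((n - j).choose (j + 1) : ℤ) * P (p + ↑n - 1 - 3 * ↑j) := by
    rw [← Finset.sum_add_distrib]
    exact Finset.sum_congr rfl hterm
  rw [hG] at hsum
  linarith [hsum, hf0]

theorem stmt17 (P : ℤ → ℤ)
    (hP : ∀ n : ℤ, P n = P (n - 2) + P (n - 3))
    (hP0 : P 0 = 1) (hP1 : P 1 = 1) (hP2 : P 2 = 1) :
    ∀ (n : ℕ) (p : ℤ),
      ∑ j ∈ Finset.range (n / 2 + 1),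
        (-1 : ℤ) ^ j * (Nat.choose (n - j) j : ℤ) * P (p + n - 3 * j)
      = (-1 : ℤ) ^ (n + 1) * (P (p + 1) * P (n - 3) - P p * P (n - 2)) := by
  have hm1 : P (-1) = 0 := by
    have h := hP 2
    norm_num at h
    linarith
  have hm2 : P (-2) = 1 := by
    have h := hP 1
    norm_num at h
    linarith
  have hm3 : P (-3) = 0 := by
    have h := hP 0
    norm_num at h
    linarith
  have key : ∀ n : ℕ,
      (∀ p : ℤ, Spad P n p
        = (-1 : ℤ) ^ (n + 1) * (P (p + 1) * P ((n : ℤ) - 3) - P p * P ((n : ℤ) - 2)))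
      ∧ (∀ p : ℤ, Spad P (n + 1) p
        = (-1 : ℤ) ^ (n + 1 + 1) * (P (p + 1) * P ((↑(n + 1) : ℤ) - 3) - P p * P ((↑(n + 1) : ℤ) - 2))) := by
    intro n
    induction n with
    | zero =>
      constructor
      · intro p
        simp only [Spad, Finset.sum_range_one]
        norm_num [hm2, hm3]
      · intro p
        simp only [Spad, Finset.sum_range_one]
        norm_num [hm1, hm2]
    | succ n ih =>
      refine ⟨ih.2, fun p => ?_⟩
      rw [Spad_rec, ih.2 (p + 1), ih.1 (p - 1)]
      have e1 : ((↑(n + 1) : ℤ)) - 3 = (n : ℤ) - 2 := by push_cast; ring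
      have e2 : ((↑(n + 1) : ℤ)) - 2 = (n : ℤ) - 1 := by push_cast; ring
      have e3 : ((↑(n + 1 + 1) : ℤ)) - 3 = (n : ℤ) - 1 := by push_cast; ring
      have e4 : ((↑(n + 1 + 1) : ℤ)) - 2 = (n : ℤ) := by push_cast; ring
      rw [e1, e2, e3, e4]
      have hr1 : P (n : ℤ) = P ((n : ℤ) - 2) + P ((n : ℤ) - 3) := hP (n : ℤ)
      have hr2 : P (p + 2) = P p + P (p - 1) := by
        have h := hP (p + 2)
        rw [show p + 2 - 2 = p by ring, show p + 2 - 3 = p - 1 by ring] at h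
        exact h
      have hr3 : p - 1 + 1 = p := by ring
      rw [hr3] at *
      rw [show p + 1 + 1 = p + 2 by ring, hr1, hr2]
      ring
  intro n p
  exact (key n).1 p
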